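/- Let λ̃_1 ≥ λ̃_2 ≥ ... ≥ λ̃_p > 0 be a nonincreasing positive sequence, and define the sorted-weighted norm ‖β‖_{λ̃*} = Σ_{i=1}^p λ̃_i β_{i*}, where β_{i*} is the i-th largest absolute value among entries of β. If β ∈ ℝ^p has at most k nonzero entries and u = β̂ − β for any β̂ ∈ ℝ^p, then ‖β‖_{λ̃*} − ‖β̂‖_{λ̃*} ≤ (Σ_{i=1}^k λ̃_i²)^{1/2} ‖u‖_2 − Σ_{i=k+1}^p λ̃_i u_{i*}. -/

import Mathlib

/-- `descSort f i` is the `(i+1)`-th largest value of `f`. -/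
noncomputable def descSort {n : ℕ} (f : Fin n → ℝ) : Fin n → ℝ :=
  fun i => f (Tuple.sort f i.rev)

namespace SlopeAux

noncomputable def sortPerm {n : ℕ} (f : Fin n → ℝ) : Equiv.Perm (Fin n) :=
  Fin.revPerm.trans (Tuple.sort f)

lemma descSort_eq_sortPerm {n : ℕ} (f : Fin n → ℝ) (i : Fin n) :
    descSort f i = f (sortPerm f i) := rfl

lemma descSort_antitone {n : ℕ} (f : Fin n → ℝ) : Antitone (descSort f) := by
  intro i j hij
  exact Tuple.monotone_sort f (Fin.rev_le_rev.2 hij)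

open Finset in
lemma card_lt_descSort_le {n : ℕ} (f : Fin n → ℝ) (i : Fin n) :
    (univ.filter fun j => descSort f i < f j).card ≤ i.val := by
  have h : (univ.filter fun j => descSort f i < f j).card ≤ (Finset.Iio i).card := by
    apply Finset.card_le_card_of_injOn (fun j => (sortPerm f).symm j)
    · intro j hj
      simp only [Finset.mem_coe, mem_filter, mem_univ, true_and] at hj
      simp only [Finset.mem_coe, Finset.mem_Iio]
      by_contra hle
      push_neg at hle
      have h2 := descSort_antitone f hle
      rw [descSort_eq_sortPerm, Equiv.apply_symm_apply] at h2
      exact absurd hj (not_lt.2 h2)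
    · exact fun a _ b _ h => (sortPerm f).symm.injective h
  simpa using h

open Finset in
lemma descSort_le_of_card {n : ℕ} (f : Fin n → ℝ) (i : Fin n) (c : ℝ)
    (h : (univ.filter fun j => c < f j).card ≤ i.val) : descSort f i ≤ c := by
  by_contra hc
  push_neg at hc
  have h2 : (Finset.Iic i).card ≤ (univ.filter fun j => c < f j).card := by
    apply Finset.card_le_card_of_injOn (fun j => sortPerm f j)
    · intro j hj
      simp only [Finset.mem_coe, Finset.mem_Iic] at hj
      simp only [Finset.mem_coe, mem_filter, mem_univ, true_and]
      have h3 : descSort f i ≤ descSort f j := descSort_antitone f hj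
      rw [descSort_eq_sortPerm f j] at h3
      exact hc.trans_le h3
    · exact fun a _ b _ hab => (sortPerm f).injective hab
  rw [Fin.card_Iic] at h2
  omega

end SlopeAux


open SlopeAux in
open Finset in
set_option maxHeartbeats 2000000 in
/-- Lemma on the sorted weighted (SLOPE-type) norm: if `β` has at most `k` nonzero
entries and `u = β̂ - β`, then
`‖β‖_{λ̃*} - ‖β̂‖_{λ̃*} ≤ √(∑_{i≤k} λ̃ i²) ‖u‖₂ - ∑_{i>k} λ̃ i u_{i*}`. -/
theorem stmt3 (p k : ℕ) (hk1 : 1 ≤ k) (hkp : k ≤ p)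
    (tlam : Fin p → ℝ) (hpos : ∀ i, 0 < tlam i)
    (hanti : ∀ i j : Fin p, i ≤ j → tlam j ≤ tlam i)
    (β βhat : Fin p → ℝ)
    (hsparse : (Finset.univ.filter (fun i => β i ≠ 0)).card ≤ k)
    (u : Fin p → ℝ) (hu : u = βhat - β) :
    ∑ i, tlam i * descSort (fun j => |β j|) i
      - ∑ i, tlam i * descSort (fun j => |βhat j|) i
    ≤ Real.sqrt (∑ i ∈ Finset.univ.filter (fun i : Fin p => i.val < k), (tlam i)^2)
        * Real.sqrt (∑ i, (u i)^2)
      - ∑ i ∈ Finset.univ.filter (fun i : Fin p => k ≤ i.val),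
          tlam i * descSort (fun j => |u j|) i := by
  classical
  set au : Fin p → ℝ := fun j => |u j| with hau
  set eu : Equiv.Perm (Fin p) := sortPerm au with heu
  set T : Finset (Fin p) := Finset.univ.filter (fun x => β (eu x) ≠ 0) with hT
  have hTk : T.card ≤ k := by
    refine le_trans (Finset.card_le_card_of_injOn (fun x => eu x) ?_ ?_) hsparse
    · intro x hx
      simp only [Finset.mem_coe, hT, mem_filter, mem_univ, true_and] at hx ⊢
      exact hx
    · exact fun a _ b _ hab => eu.injective hab
  obtain ⟨A, hTA, -, hAcard⟩ := Finset.exists_subsuperset_card_eq (Finset.subset_univ T)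
    hTk (by simpa using hkp)
  have hAc : Aᶜ.card = p - k := by
    rw [Finset.card_compl, hAcard]; simp
  set eA : Fin k ≃o A := A.orderIsoOfFin hAcard with heA
  set eB : Fin (p - k) ≃o (Aᶜ : Finset (Fin p)) := Aᶜ.orderIsoOfFin hAc with heB
  set w : Fin k → ℝ := fun m => |β (eu (eA m))| with hw
  set ψ : Fin p → Fin p := fun i =>
    if h : i.val < k then eu ((eA (sortPerm w ⟨i.val, h⟩)) : Fin p)
    else eu ((eB ⟨i.val - k, by omega⟩) : Fin p) with hψ
  have hψpos : ∀ (i : Fin p) (h : i.val < k), ψ i = eu ((eA (sortPerm w ⟨i.val, h⟩)) : Fin p) := by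
    intro i h; simp only [hψ, dif_pos h]
  have hψneg : ∀ (i : Fin p) (h : ¬ i.val < k),
      ψ i = eu ((eB ⟨i.val - k, by omega⟩) : Fin p) := by
    intro i h; simp only [hψ, dif_neg h]
  -- injectivity
  have hinj : Function.Injective ψ := by
    intro a b hab
    by_cases ha : a.val < k <;> by_cases hb : b.val < k
    · rw [hψpos a ha, hψpos b hb] at hab
      have h1 := eA.injective (Subtype.coe_injective (eu.injective hab))
      have h2 := (sortPerm w).injective h1
      exact Fin.ext (by simpa using congrArg Fin.val h2)
    · rw [hψpos a ha, hψneg b hb] at hab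
      have h1 := eu.injective hab
      have h2 : ((eA (sortPerm w ⟨a.val, ha⟩)) : Fin p) ∈ A := Finset.coe_mem _
      have h3 : ((eA (sortPerm w ⟨a.val, ha⟩)) : Fin p) ∈ Aᶜ := h1 ▸ Finset.coe_mem _
      rw [Finset.mem_compl] at h3
      exact absurd h2 h3
    · rw [hψneg a ha, hψpos b hb] at hab
      have h1 := eu.injective hab
      have h2 : ((eA (sortPerm w ⟨b.val, hb⟩)) : Fin p) ∈ A := Finset.coe_mem _
      have h3 : ((eA (sortPerm w ⟨b.val, hb⟩)) : Fin p) ∈ Aᶜ := h1.symm ▸ Finset.coe_mem _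
      rw [Finset.mem_compl] at h3
      exact absurd h2 h3
    · rw [hψneg a ha, hψneg b hb] at hab
      have h1 := eB.injective (Subtype.coe_injective (eu.injective hab))
      have h2 : a.val - k = b.val - k := by simpa using congrArg Fin.val h1
      exact Fin.ext (by omega)
  -- tail: β vanishes on ψ of tail indices
  have htail0 : ∀ (i : Fin p), ¬ i.val < k → β (ψ i) = 0 := by
    intro i h
    rw [hψneg i h]
    have h3 : ((eB ⟨i.val - k, by omega⟩) : Fin p) ∈ Aᶜ := Finset.coe_mem _
    rw [Finset.mem_compl] at h3
    by_contra hne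
    exact h3 (hTA (by simp only [hT, mem_filter, mem_univ, true_and]; exact hne))
  -- tail: sorted |u| bound
  have htailu : ∀ (i : Fin p), ¬ i.val < k → descSort au i ≤ au (ψ i) := by
    intro i h
    rw [hψneg i h]
    set m : Fin (p - k) := ⟨i.val - k, by omega⟩ with hm
    set x : Fin p := ((eB m) : Fin p) with hx
    have hxa : au (eu x) = descSort au x := (descSort_eq_sortPerm au x).symm
    rw [hxa]
    refine descSort_antitone au ?_
    -- x ≤ i
    have hcard : (Finset.Iio x).card = x.val := by simp
    have hsplit : (Finset.Iio x).card
        = ((Finset.Iio x).filter (fun y => y ∈ A)).card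
          + ((Finset.Iio x).filter (fun y => y ∉ A)).card :=
      (Finset.card_filter_add_card_filter_not _).symm
    have hA1 : ((Finset.Iio x).filter (fun y => y ∈ A)).card ≤ k := by
      rw [← hAcard]
      exact Finset.card_le_card (fun y hy => (Finset.mem_filter.1 hy).2)
    have hA2 : ((Finset.Iio x).filter (fun y => y ∉ A)).card ≤ m.val := by
      have hle : ((Finset.Iio x).filter (fun y => y ∉ A)).card ≤ (Finset.Iio m).card := by
        refine Finset.card_le_card_of_injOn
          (fun y => if h : y ∈ Aᶜ then eB.symm ⟨y, h⟩ else m) ?_ ?_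
        · intro y hy
          simp only [Finset.mem_coe, Finset.mem_filter, Finset.mem_Iio] at hy
          have hyc : y ∈ Aᶜ := Finset.mem_compl.2 hy.2
          beta_reduce
          rw [dif_pos hyc, Finset.mem_coe, Finset.mem_Iio, ← eB.lt_iff_lt, OrderIso.apply_symm_apply]
          exact Subtype.coe_lt_coe.1 hy.1
        · intro a ha b hb hab
          simp only [Finset.coe_filter, Finset.mem_Iio, Set.mem_setOf_eq] at ha hb
          simp only at hab
          rw [dif_pos (Finset.mem_compl.2 ha.2), dif_pos (Finset.mem_compl.2 hb.2)] at hab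
          exact Subtype.mk_eq_mk.1 (eB.symm.injective hab)
      rw [Fin.card_Iio] at hle
      exact hle
    have hmval : m.val = i.val - k := rfl
    have hxc : x.val = (Finset.Iio x).card := (Fin.card_Iio x).symm
    exact Fin.le_def.2 (by omega)
  -- tail: sorted |β| vanishes
  have hβtail : ∀ (i : Fin p), ¬ i.val < k → descSort (fun j => |β j|) i = 0 := by
    intro i h
    refine le_antisymm ?_ ?_
    · refine descSort_le_of_card _ i 0 ?_
      refine le_trans (le_of_eq (congrArg Finset.card ?_)) (le_trans hsparse (by omega))
      apply Finset.filter_congr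
      intro j _
      simp [abs_pos]
    · rw [descSort_eq_sortPerm]
      exact abs_nonneg _
  -- head: sorted |β| bound
  have hhead : ∀ (i : Fin p) (h : i.val < k),
      descSort (fun j => |β j|) i ≤ |β (ψ i)| := by
    intro i h
    rw [hψpos i h]
    have hwc : |β (eu ((eA (sortPerm w ⟨i.val, h⟩)) : Fin p))| = descSort w ⟨i.val, h⟩ := rfl
    rw [hwc]
    set c : ℝ := descSort w ⟨i.val, h⟩ with hc
    have hc0 : 0 ≤ c := by rw [hc, descSort_eq_sortPerm]; exact abs_nonneg _
    refine descSort_le_of_card _ i c ?_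
    have hle : (univ.filter fun j => c < |β j|).card
        ≤ (univ.filter fun m0 : Fin k => c < w m0).card := by
      refine Finset.card_le_card_of_injOn
        (fun j => if hj : eu.symm j ∈ A then eA.symm ⟨eu.symm j, hj⟩ else ⟨0, hk1⟩) ?_ ?_
      · intro j hj
        simp only [Finset.mem_coe, mem_filter, mem_univ, true_and] at hj
        have hne : β j ≠ 0 := by
          intro h0
          rw [h0] at hj
          simp at hj
          exact absurd hj (not_lt.2 hc0)
        have hmem : eu.symm j ∈ A := by
          refine hTA ?_
          simp only [hT, mem_filter, mem_univ, true_and, Equiv.apply_symm_apply]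
          exact hne
        beta_reduce
        rw [dif_pos hmem]
        simp only [Finset.mem_coe, mem_filter, mem_univ, true_and, hw]
        rw [OrderIso.apply_symm_apply]
        simpa using hj
      · intro a ha b hb hab
        simp only [Finset.coe_filter, mem_univ, Set.mem_setOf_eq, true_and] at ha hb
        have hnea : β a ≠ 0 := by
          intro h0; rw [h0] at ha; simp at ha; exact absurd ha (not_lt.2 hc0)
        have hneb : β b ≠ 0 := by
          intro h0; rw [h0] at hb; simp at hb; exact absurd hb (not_lt.2 hc0)
        have hma : eu.symm a ∈ A := hTA (by
          simp only [hT, mem_filter, mem_univ, true_and, Equiv.apply_symm_apply]; exact hnea)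
        have hmb : eu.symm b ∈ A := hTA (by
          simp only [hT, mem_filter, mem_univ, true_and, Equiv.apply_symm_apply]; exact hneb)
        simp only at hab
        rw [dif_pos hma, dif_pos hmb] at hab
        have h1 := Subtype.mk_eq_mk.1 (eA.symm.injective hab)
        exact eu.symm.injective h1
    exact le_trans hle (card_lt_descSort_le w ⟨i.val, h⟩)
  -- rearrangement step
  have hmono : Monovary tlam (descSort (fun j => |βhat j|)) := by
    intro i j hij
    rcases le_total j i with hji | hij2
    · exact hanti j i hji
    · exact absurd hij (not_lt.2 (descSort_antitone _ hij2))
  set φ : Equiv.Perm (Fin p) := Equiv.ofBijective ψ (Finite.injective_iff_bijective.1 hinj)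
    with hφ
  have hφa : ∀ i, φ i = ψ i := fun i => rfl
  set σ : Equiv.Perm (Fin p) := φ.trans (sortPerm (fun j => |βhat j|)).symm with hσ
  have hcomp : ∀ i, descSort (fun j => |βhat j|) (σ i) = |βhat (ψ i)| := by
    intro i
    rw [descSort_eq_sortPerm]
    have h5 : sortPerm (fun j => |βhat j|) (σ i) = φ i := by
      simp [hσ, Equiv.trans_apply]
    rw [h5]
    rfl
  have hB : ∑ i, tlam i * |βhat (ψ i)| ≤ ∑ i, tlam i * descSort (fun j => |βhat j|) i := by
    have h6 := hmono.sum_smul_comp_perm_le_sum_smul (σ := σ)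
    simp only [smul_eq_mul] at h6
    calc ∑ i, tlam i * |βhat (ψ i)|
        = ∑ i, tlam i * descSort (fun j => |βhat j|) (σ i) :=
          Finset.sum_congr rfl fun i _ => by rw [hcomp]
      _ ≤ _ := h6
  have hau0 : ∀ j, 0 ≤ au j := fun j => abs_nonneg (u j)
  -- main decomposition
  have hstep : ∑ i, tlam i * descSort (fun j => |β j|) i
      - ∑ i, tlam i * descSort (fun j => |βhat j|) i
      ≤ ∑ i ∈ univ.filter (fun i : Fin p => i.val < k), tlam i * au (ψ i)
        - ∑ i ∈ univ.filter (fun i : Fin p => k ≤ i.val), tlam i * descSort au i := by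
    have h1 : ∑ i, tlam i * descSort (fun j => |β j|) i
        - ∑ i, tlam i * descSort (fun j => |βhat j|) i
        ≤ ∑ i, tlam i * (descSort (fun j => |β j|) i - |βhat (ψ i)|) := by
      have h7 := sub_le_sub_left hB (∑ i, tlam i * descSort (fun j => |β j|) i)
      refine le_trans h7 (le_of_eq ?_)
      rw [← Finset.sum_sub_distrib]
      exact Finset.sum_congr rfl fun i _ => by ring
    refine le_trans h1 ?_
    rw [← Finset.sum_filter_add_sum_filter_not univ (fun i : Fin p => i.val < k)
      (fun i => tlam i * (descSort (fun j => |β j|) i - |βhat (ψ i)|))]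
    have hA' : ∑ i ∈ univ.filter (fun i : Fin p => i.val < k),
        tlam i * (descSort (fun j => |β j|) i - |βhat (ψ i)|)
        ≤ ∑ i ∈ univ.filter (fun i : Fin p => i.val < k), tlam i * au (ψ i) := by
      refine Finset.sum_le_sum fun i hi => ?_
      simp only [mem_filter, mem_univ, true_and] at hi
      refine mul_le_mul_of_nonneg_left ?_ (le_of_lt (hpos i))
      have h2 := hhead i hi
      have h12 : u (ψ i) = βhat (ψ i) - β (ψ i) := by rw [hu]; rfl
      have h13 : au (ψ i) = |u (ψ i)| := rfl
      have h3 : |β (ψ i)| - |βhat (ψ i)| ≤ au (ψ i) := by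
        rw [h13, h12, abs_sub_comm]
        exact abs_sub_abs_le_abs_sub (β (ψ i)) (βhat (ψ i))
      linarith
    have hB' : ∑ i ∈ univ.filter (fun i : Fin p => ¬ i.val < k),
        tlam i * (descSort (fun j => |β j|) i - |βhat (ψ i)|)
        ≤ - ∑ i ∈ univ.filter (fun i : Fin p => k ≤ i.val), tlam i * descSort au i := by
      have hfe : univ.filter (fun i : Fin p => ¬ i.val < k)
          = univ.filter (fun i : Fin p => k ≤ i.val) := by
        apply Finset.filter_congr; intro j _; simp [not_lt]
      rw [hfe, ← Finset.sum_neg_distrib]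
      refine Finset.sum_le_sum fun i hi => ?_
      simp only [mem_filter, mem_univ, true_and] at hi
      have hik : ¬ i.val < k := not_lt.2 hi
      have hz := hβtail i hik
      have h0 := htail0 i hik
      have h12 : u (ψ i) = βhat (ψ i) - β (ψ i) := by rw [hu]; rfl
      have h13 : au (ψ i) = |u (ψ i)| := rfl
      have hbu : |βhat (ψ i)| = au (ψ i) := by
        rw [h13, h12, h0, sub_zero]
      rw [hz, hbu, zero_sub]
      have h10 := htailu i hik
      have h11 := (hpos i).le
      nlinarith
    linarith
  refine le_trans hstep ?_
  have hCS : ∑ i ∈ univ.filter (fun i : Fin p => i.val < k), tlam i * au (ψ i)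
      ≤ Real.sqrt (∑ i ∈ univ.filter (fun i : Fin p => i.val < k), (tlam i)^2)
        * Real.sqrt (∑ i, (u i)^2) := by
    set s : Finset (Fin p) := univ.filter (fun i : Fin p => i.val < k) with hs
    have h1 := Finset.sum_mul_sq_le_sq_mul_sq s tlam (fun i => au (ψ i))
    have hnn : 0 ≤ ∑ i ∈ s, tlam i * au (ψ i) :=
      Finset.sum_nonneg fun i _ => mul_nonneg (hpos i).le (hau0 _)
    have h2 : ∑ i ∈ s, tlam i * au (ψ i)
        ≤ Real.sqrt ((∑ i ∈ s, tlam i ^ 2) * ∑ i ∈ s, au (ψ i) ^ 2) := by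
      rw [← Real.sqrt_sq hnn]
      exact Real.sqrt_le_sqrt h1
    rw [Real.sqrt_mul (Finset.sum_nonneg fun i _ => sq_nonneg _)] at h2
    refine le_trans h2 (mul_le_mul_of_nonneg_left ?_ (Real.sqrt_nonneg _))
    refine Real.sqrt_le_sqrt ?_
    have h3 : ∑ i ∈ s, au (ψ i) ^ 2 ≤ ∑ i, au (ψ i) ^ 2 :=
      Finset.sum_le_sum_of_subset_of_nonneg (Finset.subset_univ s) fun i _ _ => sq_nonneg _
    have h4 : ∑ i, au (ψ i) ^ 2 = ∑ i, (u i) ^ 2 := by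
      calc ∑ i, au (ψ i) ^ 2 = ∑ i, au (φ i) ^ 2 := rfl
        _ = ∑ j, au j ^ 2 := Equiv.sum_comp φ (fun j => au j ^ 2)
        _ = ∑ j, (u j) ^ 2 := Finset.sum_congr rfl fun j _ => by
              rw [show au j = |u j| from rfl]; exact sq_abs (u j)
    linarith
  exact sub_le_sub_right hCS _
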